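/- Let D be an m×m matrix over Z/2Z and let R = D·V be reduced, where V is invertible upper triangular. Then for every pair (i,j), column j of R is nonzero with pivot i if and only if rank(D[≥ i, ≤ j]) − rank(D[≥ i+1, ≤ j]) − rank(D[≥ i, ≤ j−1]) + rank(D[≥ i+1, ≤ j−1]) = 1. In particular, the pivot pairing of R is uniquely determined by D and does not depend on the choice of V. -/

import Mathlib

open Matrix Finset

/-- `i` is the pivot of column `j` of `M`. -/
def IsPivot {m : ℕ} (M : Matrix (Fin m) (Fin m) (ZMod 2)) (i j : Fin m) : Prop :=
  M i j ≠ 0 ∧ ∀ i' : Fin m, i < i' → M i' j = 0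

/-- `M` is reduced: all nonzero columns have pairwise distinct pivots. -/
def Reduced {m : ℕ} (M : Matrix (Fin m) (Fin m) (ZMod 2)) : Prop :=
  ∀ i j j' : Fin m, IsPivot M i j → IsPivot M i j' → j = j'

/-- Rank of the submatrix of `M` with rows satisfying `P` and columns
satisfying `Q`. -/
noncomputable def subRank {m : ℕ} (M : Matrix (Fin m) (Fin m) (ZMod 2))
    (P Q : Fin m → Prop) [DecidablePred P] [DecidablePred Q] : ℕ :=
  Matrix.rank (fun (a : {i : Fin m // P i}) (b : {j : Fin m // Q j}) => M a.1 b.1)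

open scoped Classical

/-- A matrix whose nonzero columns (those in `s`) have pivots, with distinct
pivots, has rank equal to the number of columns in `s`. -/
lemma rank_eq_card_of_pivots {n k : Type*} [Fintype n] [Fintype k]
    [LinearOrder n] {F : Type*} [Field F]
    (M : Matrix n k F) (s : Finset k)
    (h0 : ∀ j ∉ s, ∀ a, M a j = 0)
    (hpiv : ∀ j ∈ s, ∃ a, M a j ≠ 0 ∧ ∀ a', a < a' → M a' j = 0)
    (hinj : ∀ j ∈ s, ∀ j' ∈ s, ∀ a, (M a j ≠ 0 ∧ ∀ a', a < a' → M a' j = 0) →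
        (M a j' ≠ 0 ∧ ∀ a', a < a' → M a' j' = 0) → j = j') :
    M.rank = s.card := by
  classical
  choose p hp1 hp2 using hpiv
  set v : {x // x ∈ s} → (n → F) := fun b => Mᵀ b.1 with hv
  have hli : LinearIndependent F v := by
    rw [Fintype.linearIndependent_iff]
    intro g hsum
    by_contra hcon
    push_neg at hcon
    obtain ⟨b₀, hb₀⟩ := hcon
    set t : Finset {x // x ∈ s} := Finset.univ.filter (fun b => g b ≠ 0) with ht
    have htne : t.Nonempty := ⟨b₀, by simp [ht, hb₀]⟩
    obtain ⟨b, hbt, hbmax⟩ := t.exists_max_image (fun b => p b.1 b.2) htne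
    have hgb : g b ≠ 0 := by simpa [ht] using hbt
    have := congrFun hsum (p b.1 b.2)
    simp only [Finset.sum_apply, Pi.smul_apply, Pi.zero_apply, smul_eq_mul] at this
    rw [Finset.sum_eq_single b] at this
    · have : g b * M (p b.1 b.2) b.1 = 0 := this
      exact hgb (by
        rcases mul_eq_zero.mp this with h | h
        · exact h
        · exact absurd h (hp1 b.1 b.2))
    · intro c _ hcb
      by_cases hgc : g c = 0
      · simp [hv, hgc]
      · have hct : c ∈ t := by simp [ht, hgc]
        have hle : p c.1 c.2 ≤ p b.1 b.2 := hbmax c hct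
        have hne : p c.1 c.2 ≠ p b.1 b.2 := by
          intro he
          apply hcb
          apply Subtype.ext
          refine hinj c.1 c.2 b.1 b.2 (p c.1 c.2) ⟨hp1 c.1 c.2, hp2 c.1 c.2⟩ ?_
          rw [he]
          exact ⟨hp1 b.1 b.2, hp2 b.1 b.2⟩
        have : M (p b.1 b.2) c.1 = 0 := hp2 c.1 c.2 _ (lt_of_le_of_ne hle hne)
        simp [hv, this]
    · intro h; exact absurd (Finset.mem_univ b) h
  have hspan : Submodule.span F (Set.range Mᵀ) = Submodule.span F (Set.range v) := by
    apply le_antisymm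
    · rw [Submodule.span_le]
      rintro x ⟨j, rfl⟩
      by_cases hj : j ∈ s
      · exact Submodule.subset_span ⟨⟨j, hj⟩, rfl⟩
      · have : Mᵀ j = 0 := funext fun a => h0 j hj a
        rw [this]
        exact Submodule.zero_mem _
    · rw [Submodule.span_le]
      rintro x ⟨b, rfl⟩
      exact Submodule.subset_span ⟨b.1, rfl⟩
  rw [Matrix.rank_eq_finrank_span_cols]
  change Module.finrank F ↥(Submodule.span F (Set.range Mᵀ)) = s.card
  rw [hspan, finrank_span_eq_card hli,
    Fintype.card_coe]

/-- Pushing right multiplication by an invertible upper-triangular matrix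
through a lower-left submatrix rank. -/
lemma subRank_mul_eq {m : ℕ} (D V : Matrix (Fin m) (Fin m) (ZMod 2))
    (hVu : IsUnit V) (hVt : V.BlockTriangular id)
    (P Q : Fin m → Prop) [DecidablePred P] [DecidablePred Q]
    (hQ : ∀ b c : Fin m, Q b → c ≤ b → Q c) :
    subRank (D * V) P Q = subRank D P Q := by
  classical
  set A : Matrix {i // P i} {j // Q j} (ZMod 2) := fun a b => D a.1 b.1 with hA
  set V' : Matrix {j // Q j} {j // Q j} (ZMod 2) := fun b c => V b.1 c.1 with hV'
  have hdetV : V.det ≠ 0 := by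
    have := (Matrix.isUnit_iff_isUnit_det V).mp hVu
    exact this.ne_zero
  have hdiag : ∀ c : Fin m, V c c ≠ 0 := by
    rw [Matrix.det_of_upperTriangular hVt] at hdetV
    exact fun c => (Finset.prod_ne_zero_iff.mp hdetV) c (Finset.mem_univ c)
  have hV't : V'.BlockTriangular id := by
    intro x y hxy
    exact hVt (show (id y.1 : Fin m) < id x.1 from hxy)
  have hdetV' : IsUnit V'.det := by
    rw [Matrix.det_of_upperTriangular hV't]
    rw [isUnit_iff_ne_zero, Finset.prod_ne_zero_iff]
    exact fun b _ => hdiag b.1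
  have hfact : (fun (a : {i // P i}) (b : {j // Q j}) => (D * V) a.1 b.1) = A * V' := by
    funext a b
    show (D * V) a.1 b.1 = ∑ c : {j // Q j}, D a.1 c.1 * V c.1 b.1
    rw [Matrix.mul_apply]
    rw [← Finset.sum_subtype (Finset.univ.filter Q)
      (fun x => by simp) (fun c => D a.1 c * V c b.1)]
    symm
    apply Finset.sum_filter_of_ne
    intro c _ hc
    by_contra hQc
    have hbc : (b.1 : Fin m) < c := by
      rcases lt_or_ge b.1 c with h | h
      · exact h
      · exact absurd (hQ b.1 c b.2 h) hQc
    exact hc (by rw [hVt hbc, mul_zero])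
  unfold subRank
  rw [hfact, Matrix.rank_mul_eq_left_of_isUnit_det V' A hdetV']

/-- Existence of a pivot for a nonzero column. -/
lemma exists_pivot {m : ℕ} (R : Matrix (Fin m) (Fin m) (ZMod 2)) (j : Fin m)
    (h : ∃ a, R a j ≠ 0) : ∃ i, IsPivot R i j := by
  classical
  set t : Finset (Fin m) := Finset.univ.filter (fun a => R a j ≠ 0) with ht
  obtain ⟨a₀, ha₀⟩ := h
  have htne : t.Nonempty := ⟨a₀, by simp [ht, ha₀]⟩
  obtain ⟨i, hit, himax⟩ := t.exists_max_image id htne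
  refine ⟨i, by simpa [ht] using hit, fun i' hii' => ?_⟩
  by_contra hne
  have : i' ∈ t := by simp [ht, hne]
  exact absurd (himax i' this) (not_le.mpr hii')

/-- For a reduced matrix, the rank of a lower-left submatrix counts pivots. -/
lemma subRank_eq_card {m : ℕ} (R : Matrix (Fin m) (Fin m) (ZMod 2)) (hred : Reduced R)
    (P Q : Fin m → Prop) [DecidablePred P] [DecidablePred Q]
    (hP : ∀ a a' : Fin m, P a → a ≤ a' → P a') :
    subRank R P Q
      = (Finset.univ.filter (fun j' => Q j' ∧ ∃ i', P i' ∧ IsPivot R i' j')).card := by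
  classical
  set M : Matrix {i // P i} {j // Q j} (ZMod 2) := fun a b => R a.1 b.1 with hM
  set s : Finset {j // Q j} :=
    Finset.univ.filter (fun b => ∃ i', P i' ∧ IsPivot R i' b.1) with hs
  have key : M.rank = s.card := by
    apply rank_eq_card_of_pivots
    · intro b hb a
      by_contra hMa
      apply hb
      simp only [hs, Finset.mem_filter, Finset.mem_univ, true_and]
      obtain ⟨i₀, hi₀⟩ := exists_pivot R b.1 ⟨a.1, hMa⟩
      have hai₀ : a.1 ≤ i₀ := by
        by_contra hlt
        exact hMa (hi₀.2 a.1 (not_le.mp hlt))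
      exact ⟨i₀, hP a.1 i₀ a.2 hai₀, hi₀⟩
    · intro b hb
      simp only [hs, Finset.mem_filter, Finset.mem_univ, true_and] at hb
      obtain ⟨i', hPi', hpiv⟩ := hb
      refine ⟨⟨i', hPi'⟩, hpiv.1, fun a' ha' => hpiv.2 a'.1 ha'⟩
    · intro b hb b' hb' a ha ha'
      have hpb : IsPivot R a.1 b.1 := by
        refine ⟨ha.1, fun i'' hii'' => ?_⟩
        exact ha.2 ⟨i'', hP a.1 i'' a.2 hii''.le⟩ hii''
      have hpb' : IsPivot R a.1 b'.1 := by
        refine ⟨ha'.1, fun i'' hii'' => ?_⟩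
        exact ha'.2 ⟨i'', hP a.1 i'' a.2 hii''.le⟩ hii''
      exact Subtype.ext (hred a.1 b.1 b'.1 hpb hpb')
  unfold subRank
  rw [← hM, key]
  apply Finset.card_bij (fun (b : {j // Q j}) _ => b.1)
  · intro b hb
    simp only [hs, Finset.mem_filter, Finset.mem_univ, true_and] at hb ⊢
    exact ⟨b.2, hb⟩
  · intro b _ b' _ h
    exact Subtype.ext h
  · intro j' hj'
    simp only [Finset.mem_filter, Finset.mem_univ, true_and] at hj'
    exact ⟨⟨j', hj'.1⟩, by simp [hs, hj'.2], rfl⟩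

theorem pivot_iff_rank_formula {m : ℕ}
    (D V : Matrix (Fin m) (Fin m) (ZMod 2))
    (hVu : IsUnit V) (hVt : V.BlockTriangular id)
    (hred : Reduced (D * V)) (i j : Fin m) :
    IsPivot (D * V) i j ↔
      (subRank D (fun a => i ≤ a) (fun b => b ≤ j) : ℤ)
        - subRank D (fun a => i < a) (fun b => b ≤ j)
        - subRank D (fun a => i ≤ a) (fun b => b < j)
        + subRank D (fun a => i < a) (fun b => b < j) = 1 := by
  classical
  set R := D * V with hR
  have hQle : ∀ b c : Fin m, b ≤ j → c ≤ b → c ≤ j := fun b c hb hc => hc.trans hb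
  have hQlt : ∀ b c : Fin m, b < j → c ≤ b → c < j := fun b c hb hc => lt_of_le_of_lt hc hb
  have hPle : ∀ a a' : Fin m, i ≤ a → a ≤ a' → i ≤ a' := fun a a' ha h => ha.trans h
  have hPlt : ∀ a a' : Fin m, i < a → a ≤ a' → i < a' := fun a a' ha h => lt_of_lt_of_le ha h
  have e1 : subRank D (fun a => i ≤ a) (fun b => b ≤ j)
      = (Finset.univ.filter (fun j' => j' ≤ j ∧ ∃ i', i ≤ i' ∧ IsPivot R i' j')).card := by
    rw [← subRank_mul_eq D V hVu hVt _ _ hQle, ← hR]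
    exact subRank_eq_card R hred _ _ hPle
  have e2 : subRank D (fun a => i < a) (fun b => b ≤ j)
      = (Finset.univ.filter (fun j' => j' ≤ j ∧ ∃ i', i < i' ∧ IsPivot R i' j')).card := by
    rw [← subRank_mul_eq D V hVu hVt _ _ hQle, ← hR]
    exact subRank_eq_card R hred _ _ hPlt
  have e3 : subRank D (fun a => i ≤ a) (fun b => b < j)
      = (Finset.univ.filter (fun j' => j' < j ∧ ∃ i', i ≤ i' ∧ IsPivot R i' j')).card := by
    rw [← subRank_mul_eq D V hVu hVt _ _ hQlt, ← hR]
    exact subRank_eq_card R hred _ _ hPle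
  have e4 : subRank D (fun a => i < a) (fun b => b < j)
      = (Finset.univ.filter (fun j' => j' < j ∧ ∃ i', i < i' ∧ IsPivot R i' j')).card := by
    rw [← subRank_mul_eq D V hVu hVt _ _ hQlt, ← hR]
    exact subRank_eq_card R hred _ _ hPlt
  -- pivot uniqueness per column
  have huniq : ∀ (i₁ i₂ j' : Fin m), IsPivot R i₁ j' → IsPivot R i₂ j' → i₁ = i₂ := by
    intro i₁ i₂ j' h₁ h₂
    by_contra hne
    rcases lt_or_gt_of_ne hne with h | h
    · exact h₂.1 (h₁.2 i₂ h)
    · exact h₁.1 (h₂.2 i₁ h)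
  -- split row predicate
  have split_row : ∀ (Q : Fin m → Prop) [DecidablePred Q],
      (Finset.univ.filter (fun j' => Q j' ∧ ∃ i', i ≤ i' ∧ IsPivot R i' j')).card
        = (Finset.univ.filter (fun j' => Q j' ∧ ∃ i', i < i' ∧ IsPivot R i' j')).card
          + (Finset.univ.filter (fun j' => Q j' ∧ IsPivot R i j')).card := by
    intro Q _
    rw [← Finset.card_union_of_disjoint]
    · congr 1
      ext j'
      simp only [Finset.mem_union, Finset.mem_filter, Finset.mem_univ, true_and]
      constructor
      · rintro ⟨hQ', i', hii', hpiv⟩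
        rcases lt_or_eq_of_le hii' with h | h
        · exact Or.inl ⟨hQ', i', h, hpiv⟩
        · exact Or.inr ⟨hQ', h ▸ hpiv⟩
      · rintro (⟨hQ', i', hii', hpiv⟩ | ⟨hQ', hpiv⟩)
        · exact ⟨hQ', i', hii'.le, hpiv⟩
        · exact ⟨hQ', i, le_refl i, hpiv⟩
    · rw [Finset.disjoint_filter]
      rintro j' _ ⟨_, i', hii', hpiv⟩ ⟨_, hpivi⟩
      exact absurd (huniq i' i j' hpiv hpivi) (ne_of_gt hii')
  -- split column predicate for pivot-row-i counts
  have split_col :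
      (Finset.univ.filter (fun j' => j' ≤ j ∧ IsPivot R i j')).card
        = (Finset.univ.filter (fun j' => j' < j ∧ IsPivot R i j')).card
          + (if IsPivot R i j then 1 else 0) := by
    by_cases hpj : IsPivot R i j
    · simp only [hpj, if_true]
      have hset : (Finset.univ.filter (fun j' => j' ≤ j ∧ IsPivot R i j'))
          = insert j (Finset.univ.filter (fun j' => j' < j ∧ IsPivot R i j')) := by
        ext j'
        simp only [Finset.mem_insert, Finset.mem_filter, Finset.mem_univ, true_and]
        constructor
        · rintro ⟨hle, hpiv⟩
          rcases lt_or_eq_of_le hle with h | h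
          · exact Or.inr ⟨h, hpiv⟩
          · exact Or.inl h
        · rintro (rfl | ⟨hlt, hpiv⟩)
          · exact ⟨le_refl _, hpj⟩
          · exact ⟨hlt.le, hpiv⟩
      rw [hset, Finset.card_insert_of_notMem]
      simp only [Finset.mem_filter, Finset.mem_univ, true_and, not_and]
      intro hlt
      exact absurd rfl (ne_of_lt hlt)
    · simp only [hpj, if_false, add_zero]
      congr 1
      ext j'
      simp only [Finset.mem_filter, Finset.mem_univ, true_and]
      constructor
      · rintro ⟨hle, hpiv⟩
        rcases lt_or_eq_of_le hle with h | h
        · exact ⟨h, hpiv⟩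
        · exact absurd (h ▸ hpiv) hpj
      · rintro ⟨hlt, hpiv⟩
        exact ⟨hlt.le, hpiv⟩
  rw [e1, e2, e3, e4]
  rw [split_row (fun j' => j' ≤ j), split_row (fun j' => j' < j)]
  rw [split_col]
  constructor
  · intro hpiv
    simp only [hpiv, if_true]
    push_cast
    ring
  · intro heq
    by_contra hpiv
    simp only [hpiv, if_false] at heq
    push_cast at heq
    omega
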